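/- Let H be a real Hilbert space, A and B bounded self-adjoint nonnegative operators on H, and λ > 0. Then I + λAB is invertible with bounded inverse, i.e. it is a homeomorphism of H onto itself. -/

import Mathlib

open scoped RealInnerProductSpace

/-- Cauchy–Schwarz for a positive self-adjoint operator. -/
private lemma pos_op_cauchy_schwarz
    {H : Type*} [NormedAddCommGroup H] [InnerProductSpace ℝ H] [CompleteSpace H]
    (B : H →L[ℝ] H) (hB : IsSelfAdjoint B)
    (hBpos : ∀ u : H, 0 ≤ (inner ℝ (B u) u : ℝ)) (x y : H) :
    (inner ℝ (B x) y : ℝ) ^ 2 ≤ (inner ℝ (B x) x : ℝ) * (inner ℝ (B y) y : ℝ) := by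
  have hsymm := hB.isSymmetric
  have key : ∀ t : ℝ, 0 ≤ (inner ℝ (B y) y : ℝ) * (t * t)
      + (2 * (inner ℝ (B x) y : ℝ)) * t + (inner ℝ (B x) x : ℝ) := by
    intro t
    have h := hBpos (x + t • y)
    have hyx : (inner ℝ (B y) x : ℝ) = (inner ℝ (B x) y : ℝ) :=
      (real_inner_comm _ _).trans (hsymm x y).symm
    have hyx' : t * (inner ℝ (B y) x : ℝ) = t * (inner ℝ (B x) y : ℝ) := by rw [hyx]
    simp only [map_add, map_smul, inner_add_left, inner_add_right,
      real_inner_smul_left, real_inner_smul_right, ContinuousLinearMap.coe_coe] at h ⊢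
    nlinarith [h, hyx']
  have := discrim_le_zero key
  rw [discrim] at this
  nlinarith [this]

/-- Quantitative lower bound for `1 + l • (A ∘L B)`. -/
private lemma key_bound
    {H : Type*} [NormedAddCommGroup H] [InnerProductSpace ℝ H] [CompleteSpace H]
    (A B : H →L[ℝ] H) (hA : IsSelfAdjoint A) (hB : IsSelfAdjoint B)
    (hApos : ∀ u : H, 0 ≤ (inner ℝ (A u) u : ℝ))
    (hBpos : ∀ u : H, 0 ≤ (inner ℝ (B u) u : ℝ))
    (l : ℝ) (hl : 0 < l) (u : H) :
    ‖u‖ ≤ (1 + l * ‖A‖ * ‖B‖) * ‖(1 + l • (A ∘L B)) u‖ := by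
  set T : H →L[ℝ] H := 1 + l • (A ∘L B) with hT
  have hTu : T u = u + l • A (B u) := by
    simp [hT, ContinuousLinearMap.add_apply, ContinuousLinearMap.smul_apply]
  -- Step 1 : ‖B u‖ ≤ ‖B‖ * ‖T u‖
  have hBu : ‖B u‖ ≤ ‖B‖ * ‖T u‖ := by
    rcases eq_or_ne (B u) 0 with h0 | h0
    · rw [h0]; simp only [norm_zero]; positivity
    have hcs := pos_op_cauchy_schwarz B hB hBpos u (B u)
    -- ⟪B u, u⟫ ≤ ⟪T u, B u⟫ ≤ ‖T u‖ * ‖B u‖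
    have h1 : (inner ℝ (B u) u : ℝ) ≤ (inner ℝ (T u) (B u) : ℝ) := by
      have hApp := hApos (B u)
      have : (inner ℝ (T u) (B u) : ℝ)
          = (inner ℝ (B u) u : ℝ) + l * (inner ℝ (A (B u)) (B u) : ℝ) := by
        rw [hTu, inner_add_left, real_inner_smul_left, real_inner_comm u (B u)]
      nlinarith
    have h2 : (inner ℝ (T u) (B u) : ℝ) ≤ ‖T u‖ * ‖B u‖ := real_inner_le_norm _ _
    have h3 : (inner ℝ (B (B u)) (B u) : ℝ) ≤ ‖B‖ * ‖B u‖ ^ 2 := by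
      calc (inner ℝ (B (B u)) (B u) : ℝ) ≤ ‖B (B u)‖ * ‖B u‖ := real_inner_le_norm _ _
        _ ≤ (‖B‖ * ‖B u‖) * ‖B u‖ := by
            gcongr; exact B.le_opNorm (B u)
        _ = ‖B‖ * ‖B u‖ ^ 2 := by ring
    have h4 : (inner ℝ (B u) (B u) : ℝ) = ‖B u‖ ^ 2 := real_inner_self_eq_norm_sq (B u)
    have hBu0 : (0:ℝ) < ‖B u‖ := norm_pos_iff.mpr h0
    have hBuu : (0:ℝ) ≤ (inner ℝ (B u) u : ℝ) := hBpos u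
    have hBBu : (0:ℝ) ≤ (inner ℝ (B (B u)) (B u) : ℝ) := hBpos (B u)
    have e1 : ‖B u‖ ^ 2 * ‖B u‖ ^ 2 ≤ (‖T u‖ * ‖B u‖) * (‖B‖ * ‖B u‖ ^ 2) := by
      have hmul : (inner ℝ (B u) u : ℝ) * (inner ℝ (B (B u)) (B u) : ℝ)
          ≤ (‖T u‖ * ‖B u‖) * (‖B‖ * ‖B u‖ ^ 2) :=
        mul_le_mul (h1.trans h2) h3 hBBu (by positivity)
      calc ‖B u‖ ^ 2 * ‖B u‖ ^ 2 = (inner ℝ (B u) (B u) : ℝ) ^ 2 := by rw [h4]; ring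
        _ ≤ (inner ℝ (B u) u : ℝ) * (inner ℝ (B (B u)) (B u) : ℝ) := hcs
        _ ≤ _ := hmul
    nlinarith [e1, hBu0, mul_pos (mul_pos hBu0 hBu0) hBu0]
  -- Step 2 : combine
  have hu : u = T u - l • A (B u) := by rw [hTu]; abel
  calc ‖u‖ = ‖T u - l • A (B u)‖ := by rw [← hu]
    _ ≤ ‖T u‖ + ‖l • A (B u)‖ := norm_sub_le _ _
    _ = ‖T u‖ + l * ‖A (B u)‖ := by rw [norm_smul, Real.norm_eq_abs, abs_of_pos hl]
    _ ≤ ‖T u‖ + l * (‖A‖ * ‖B u‖) := by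
        nlinarith [A.le_opNorm (B u), hl.le]
    _ ≤ ‖T u‖ + l * (‖A‖ * (‖B‖ * ‖T u‖)) := by
        nlinarith [hBu, mul_nonneg hl.le (norm_nonneg A)]
    _ = (1 + l * ‖A‖ * ‖B‖) * ‖T u‖ := by ring

theorem id_add_smul_AB_homeomorphism
    {H : Type*} [NormedAddCommGroup H] [InnerProductSpace ℝ H] [CompleteSpace H]
    (A B : H →L[ℝ] H) (hA : IsSelfAdjoint A) (hB : IsSelfAdjoint B)
    (hApos : ∀ u : H, 0 ≤ (inner ℝ (A u) u : ℝ))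
    (hBpos : ∀ u : H, 0 ≤ (inner ℝ (B u) u : ℝ))
    (l : ℝ) (hl : 0 < l) :
    ∃ e : H ≃L[ℝ] H, (e : H →L[ℝ] H) = 1 + l • (A ∘L B) := by
  set T : H →L[ℝ] H := 1 + l • (A ∘L B) with hTdef
  have hbound : ∀ u, ‖u‖ ≤ (1 + l * ‖A‖ * ‖B‖) * ‖T u‖ :=
    key_bound A B hA hB hApos hBpos l hl
  have hbound' : ∀ u, ‖u‖ ≤ (1 + l * ‖B‖ * ‖A‖) * ‖(1 + l • (B ∘L A)) u‖ :=
    key_bound B A hB hA hBpos hApos l hl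
  -- injectivity of T
  have hker : LinearMap.ker (T : H →ₗ[ℝ] H) = ⊥ := by
    rw [LinearMap.ker_eq_bot']
    intro u hu
    have := hbound u
    rw [ContinuousLinearMap.coe_coe] at hu
    rw [hu, norm_zero, mul_zero] at this
    exact norm_le_zero_iff.mp this
  -- antilipschitz, hence closed range
  have hK : (0:ℝ) ≤ 1 + l * ‖A‖ * ‖B‖ := by positivity
  have hant : AntilipschitzWith ⟨1 + l * ‖A‖ * ‖B‖, hK⟩ T :=
    T.antilipschitz_of_bound (fun x => hbound x)
  have hclosed : IsClosed (LinearMap.range (T : H →ₗ[ℝ] H) : Set H) := by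
    have : IsClosed (Set.range T) := hant.isClosed_range T.uniformContinuous
    simpa [LinearMap.coe_range] using this
  have : CompleteSpace (LinearMap.range (T : H →ₗ[ℝ] H) : Submodule ℝ H) :=
    hclosed.completeSpace_coe
  -- orthogonal complement of the range is trivial
  have hortho : (LinearMap.range (T : H →ₗ[ℝ] H))ᗮ = ⊥ := by
    rw [Submodule.eq_bot_iff]
    intro v hv
    have hall : ∀ u : H, (inner ℝ (T u) v : ℝ) = 0 := by
      intro u
      exact (Submodule.mem_orthogonal _ v).mp hv (T u) (LinearMap.mem_range_self _ u)
    have hAs := hA.isSymmetric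
    have hBs := hB.isSymmetric
    have hTv : ∀ u : H, (inner ℝ u (v + l • B (A v)) : ℝ) = 0 := by
      intro u
      have h := hall u
      have hTu : T u = u + l • A (B u) := by
        simp [hTdef, ContinuousLinearMap.add_apply, ContinuousLinearMap.smul_apply]
      rw [hTu, inner_add_left, real_inner_smul_left] at h
      have h1 : (inner ℝ (A (B u)) v : ℝ) = (inner ℝ u (B (A v)) : ℝ) := by
        calc (inner ℝ (A (B u)) v : ℝ) = (inner ℝ (B u) (A v) : ℝ) := hAs (B u) v
          _ = (inner ℝ u (B (A v)) : ℝ) := hBs u (A v)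
      rw [inner_add_right, real_inner_smul_right, ← h1]
      linarith
    have hzero : v + l • B (A v) = 0 := by
      have := hTv (v + l • B (A v))
      exact inner_self_eq_zero.mp this
    have hv0 : ‖v‖ ≤ (1 + l * ‖B‖ * ‖A‖) * ‖(1 + l • (B ∘L A)) v‖ := hbound' v
    have hTv' : (1 + l • (B ∘L A)) v = v + l • B (A v) := by
      simp [ContinuousLinearMap.add_apply, ContinuousLinearMap.smul_apply]
    rw [hTv', hzero, norm_zero, mul_zero] at hv0
    exact norm_le_zero_iff.mp hv0
  have hrange : LinearMap.range (T : H →ₗ[ℝ] H) = ⊤ := by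
    have := Submodule.orthogonal_orthogonal (LinearMap.range (T : H →ₗ[ℝ] H))
    rw [hortho, Submodule.bot_orthogonal_eq_top] at this
    exact this.symm
  exact ⟨ContinuousLinearEquiv.ofBijective T hker hrange,
    ContinuousLinearEquiv.coe_ofBijective T hker hrange⟩
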